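/- Let g be a 4-dimensional complex Lie algebra. Then the derived algebra [g,g] cannot be isomorphic to the 2-dimensional non-abelian Lie algebra aff₁; more precisely, if dim [g,g] = 2 then [g,g] is abelian. -/

import Mathlib

-- auxiliary: 2-dim Lie algebra with all adjoint traces zero is abelian
theorem aux_two_dim (L : Type*) [LieRing L] [LieAlgebra ℂ L] [Module.Finite ℂ L]
    (h2 : Module.finrank ℂ L = 2)
    (htr : ∀ z : L, LinearMap.trace ℂ L (LieModule.toEnd ℂ L L z) = 0) :
    IsLieAbelian L := by
  constructor
  intro u v
  by_contra hne
  have hindep : LinearIndependent ℂ ![u, v] := by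
    rw [LinearIndependent.pair_iff]
    intro s t hst
    have h1 : s • ⁅u, v⁆ = 0 := by
      have := congrArg (fun w => ⁅w, v⁆) hst
      simpa using this
    have hs : s = 0 := by
      by_contra hs; exact hne (by simpa [hs] using (smul_eq_zero.mp h1).resolve_left hs)
    have h2' : t • ⁅u, v⁆ = 0 := by
      have := congrArg (fun w => ⁅u, w⁆) hst
      simpa [hs] using this
    have ht : t = 0 := by
      by_contra ht; exact hne ((smul_eq_zero.mp h2').resolve_left ht)
    exact ⟨hs, ht⟩
  have hcard : Fintype.card (Fin 2) = Module.finrank ℂ L := by simp [h2]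
  let b := basisOfLinearIndependentOfCardEqFinrank hindep hcard
  have hb : ⇑b = ![u, v] := coe_basisOfLinearIndependentOfCardEqFinrank hindep hcard
  have hb0 : b 0 = u := by rw [hb]; rfl
  have hb1 : b 1 = v := by rw [hb]; rfl
  have htrace : ∀ f : L →ₗ[ℂ] L,
      LinearMap.trace ℂ L f = b.repr (f u) 0 + b.repr (f v) 1 := by
    intro f
    rw [LinearMap.trace_eq_matrix_trace ℂ b f, Matrix.trace]
    simp [Matrix.diag, LinearMap.toMatrix_apply, Fin.sum_univ_two, hb0, hb1]
  have t0 := htr u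
  have t1 := htr v
  rw [htrace] at t0 t1
  simp only [LieModule.toEnd_apply_apply, lie_self] at t0 t1
  have ha0 : b.repr ⁅u, v⁆ 0 = 0 := by
    rw [← lie_skew u v, map_neg, Finsupp.neg_apply, neg_eq_zero]
    simpa using t1
  have ha1 : b.repr ⁅u, v⁆ 1 = 0 := by simpa using t0
  apply hne
  have : b.repr ⁅u, v⁆ = 0 := by
    ext i
    fin_cases i
    · simpa using ha0
    · simpa using ha1
  simpa using b.repr.injective (by simpa using this)

attribute [local instance 100] LieRing.ofAssociativeRing

/-- For a 4-dimensional complex Lie algebra g, if the derived algebra ⁅g,g⁆ has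
dimension 2 then it is abelian (in particular it cannot be isomorphic to aff₁). -/
theorem stmt18 (g : Type*) [LieRing g] [LieAlgebra ℂ g] [FiniteDimensional ℂ g]
    (hdim : Module.finrank ℂ g = 4)
    (h2 : Module.finrank ℂ ↥⁅(⊤ : LieIdeal ℂ g), (⊤ : LieIdeal ℂ g)⁆ = 2) :
    IsLieAbelian ↥⁅(⊤ : LieIdeal ℂ g), (⊤ : LieIdeal ℂ g)⁆ := by
  let D : LieIdeal ℂ g := ⁅(⊤ : LieIdeal ℂ g), (⊤ : LieIdeal ℂ g)⁆
  have key : ∀ z ∈ D, LinearMap.trace ℂ ↥D (LieModule.toEnd ℂ g ↥D z) = 0 := by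
    intro z hz
    have hz' : z ∈ LieSubmodule.toSubmodule (D : LieSubmodule ℂ g g) := hz
    rw [LieSubmodule.lieIdeal_oper_eq_linear_span'] at hz'
    clear hz
    induction hz' using Submodule.span_induction with
    | mem w hw =>
      obtain ⟨x, -, y, -, rfl⟩ := hw
      rw [LieHom.map_lie, Ring.lie_def, map_sub, LinearMap.trace_mul_comm, sub_self]
    | zero => simp
    | add x y _ _ hx hy => rw [map_add, map_add, hx, hy, add_zero]
    | smul t x _ hx => rw [map_smul, map_smul, hx, smul_zero]
  have htr : ∀ z : ↥D, LinearMap.trace ℂ ↥D (LieModule.toEnd ℂ ↥D ↥D z) = 0 := by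
    intro z
    have heq : LieModule.toEnd ℂ ↥D ↥D z = LieModule.toEnd ℂ g ↥D (z : g) := by
      ext w; rfl
    rw [heq]
    exact key (z : g) z.2
  exact aux_two_dim ↥D h2 htr
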